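/- Let H be finite dimensional with dim H = n and let φ be a positive linear map on B(H). Then φ is ergodic if and only if (1 + φ)^{n−1}(A) is positive definite for every positive semidefinite A ≠ 0. -/

import Mathlib

open scoped ENNReal NNReal ComplexOrder ComplexInnerProductSpace
open ContinuousLinearMap Filter Topology

noncomputable section

variable {H : Type*} [NormedAddCommGroup H] [InnerProductSpace ℂ H]

/-- A bounded operator is positive semidefinite if `⟪x, A x⟫ ≥ 0` for all `x`. -/
def IsPosSemidef (A : H →L[ℂ] H) : Prop := ∀ x : H, 0 ≤ ⟪x, A x⟫

/-- A bounded operator is positive definite if `⟪x, A x⟫ > 0` for all `x ≠ 0`. -/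
def IsPosDef (A : H →L[ℂ] H) : Prop := ∀ x : H, x ≠ 0 → 0 < ⟪x, A x⟫

variable [CompleteSpace H]

/-- The absolute value `|A| = (A⋆A)^{1/2}` of a bounded operator. -/
def opAbs (A : H →L[ℂ] H) : H →L[ℂ] H := CFC.sqrt (adjoint A * A)

/-- The trace of a positive operator, as the supremum over finite orthonormal
families of `∑ ⟪e, A e⟫`.  For positive semidefinite `A` this is `tr A`. -/
def posTrace (A : H →L[ℂ] H) : ℝ≥0∞ :=
  ⨆ (s : Finset H) (_ : Orthonormal ℂ (fun x : s => (x : H))),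
    ∑ x ∈ s, ENNReal.ofReal (⟪x, A x⟫).re

/-- The Schatten `p`-norm `(tr |A|^p)^{1/p}` (for `p = ∞`, the operator norm),
with values in `ℝ≥0∞`. -/
def schattenNorm (p : ℝ≥0∞) (A : H →L[ℂ] H) : ℝ≥0∞ :=
  if p = ∞ then ENNReal.ofReal ‖A‖
  else (posTrace (cfc (fun x : ℝ => x ^ p.toReal) (opAbs A))) ^ (1 / p.toReal)

/-- Membership in the Schatten class `J_p`. -/
def MemJp (p : ℝ≥0∞) (A : H →L[ℂ] H) : Prop := schattenNorm p A < ∞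

/-- `φ` is (the extension to `B(H)` of) a linear map on the Schatten class `J_p`. -/
structure IsLinJp (p : ℝ≥0∞) (φ : (H →L[ℂ] H) → (H →L[ℂ] H)) : Prop where
  map_mem : ∀ A, MemJp p A → MemJp p (φ A)
  map_add : ∀ A B, MemJp p A → MemJp p B → φ (A + B) = φ A + φ B
  map_smul : ∀ (c : ℂ) (A), MemJp p A → φ (c • A) = c • φ A

/-- A positive map on `J_p`: it maps the cone `C_p` into itself. -/
def IsPosMapJp (p : ℝ≥0∞) (φ : (H →L[ℂ] H) → (H →L[ℂ] H)) : Prop :=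
  ∀ A, MemJp p A → IsPosSemidef A → IsPosSemidef (φ A)

/-- `exp (t φ) A = ∑ tⁿ φⁿ(A) / n!`. -/
def expApply (φ : (H →L[ℂ] H) → (H →L[ℂ] H)) (t : ℝ) (A : H →L[ℂ] H) : H →L[ℂ] H :=
  ∑' n : ℕ, ((t ^ n / n.factorial : ℝ)) • φ^[n] A

/-- A positive map `φ` on `J_p` is ergodic if for every nonzero `A ≥ 0` in `J_p`
there is `t > 0` with `(exp t φ)(A) > 0`. -/
def ErgodicJp (p : ℝ≥0∞) (φ : (H →L[ℂ] H) → (H →L[ℂ] H)) : Prop :=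
  ∀ A, MemJp p A → IsPosSemidef A → A ≠ 0 → ∃ t : ℝ, 0 < t ∧ IsPosDef (expApply φ t A)

/-- A positive map `φ` on `J_p` is positivity improving if `φ A > 0` for every
nonzero `A ≥ 0` in `J_p`. -/
def PosImprovingJp (p : ℝ≥0∞) (φ : (H →L[ℂ] H) → (H →L[ℂ] H)) : Prop :=
  ∀ A, MemJp p A → IsPosSemidef A → A ≠ 0 → IsPosDef (φ A)

/-- The operator norm `‖φ‖_p = sup_{‖A‖_p ≤ 1} ‖φ(A)‖_p` of a map on `J_p`. -/
def opNormJp (p : ℝ≥0∞) (φ : (H →L[ℂ] H) → (H →L[ℂ] H)) : ℝ≥0∞ :=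
  ⨆ (A : H →L[ℂ] H) (_ : schattenNorm p A ≤ 1), schattenNorm p (φ A)

/-- Compactness (in sequential form) of a map on `J_p` : every `J_p`-bounded
sequence has a subsequence whose image converges in `J_p`-norm. -/
def CompactMapJp (p : ℝ≥0∞) (φ : (H →L[ℂ] H) → (H →L[ℂ] H)) : Prop :=
  ∀ (C : ℝ≥0) (A : ℕ → H →L[ℂ] H), (∀ n, schattenNorm p (A n) ≤ C) →
    ∃ g : ℕ → ℕ, StrictMono g ∧ ∃ B, MemJp p B ∧
      Tendsto (fun k => schattenNorm p (φ (A (g k)) - B)) atTop (𝓝 0)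

/-- The block operator on `ℓ²(Fin n; H)` associated with an `n × n` matrix of
bounded operators on `H`. -/
def matBlock {n : ℕ} (M : Fin n → Fin n → (H →L[ℂ] H)) :
    PiLp 2 (fun _ : Fin n => H) →L[ℂ] PiLp 2 (fun _ : Fin n => H) :=
  (PiLp.continuousLinearEquiv 2 ℂ (fun _ : Fin n => H)).symm.toContinuousLinearMap ∘L
    (ContinuousLinearMap.pi fun i => ∑ j, (M i j) ∘L (ContinuousLinearMap.proj j)) ∘L
    (PiLp.continuousLinearEquiv 2 ℂ (fun _ : Fin n => H)).toContinuousLinearMap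

/-- `n`-positivity of a map on `J_p` : the induced map `φ ⊗ 1ₙ` on `n × n` operator
matrices over `J_p` preserves positive semidefiniteness. -/
def NPositiveJp (p : ℝ≥0∞) (n : ℕ) (φ : (H →L[ℂ] H) → (H →L[ℂ] H)) : Prop :=
  ∀ M : Fin n → Fin n → (H →L[ℂ] H), (∀ i j, MemJp p (M i j)) →
    IsPosSemidef (matBlock M) → IsPosSemidef (matBlock fun i j => φ (M i j))

/-- Complete positivity: `n`-positivity for every `n`. -/
def CompletelyPositiveJp (p : ℝ≥0∞) (φ : (H →L[ℂ] H) → (H →L[ℂ] H)) : Prop :=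
  ∀ n : ℕ, NPositiveJp p n φ

/-- The real part `(A + A⋆)/2` of an operator. -/
def opRe (A : H →L[ℂ] H) : H →L[ℂ] H := (2 : ℂ)⁻¹ • (A + adjoint A)

/-- The imaginary part `(A - A⋆)/(2i)` of an operator. -/
def opIm (A : H →L[ℂ] H) : H →L[ℂ] H := (2 * Complex.I)⁻¹ • (A - adjoint A)

/-- The positive part of a self-adjoint operator, via the continuous functional calculus. -/
def opPosPart (A : H →L[ℂ] H) : H →L[ℂ] H := cfc (fun x : ℝ => max x 0) A

/-- The negative part of a self-adjoint operator, via the continuous functional calculus. -/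
def opNegPart (A : H →L[ℂ] H) : H →L[ℂ] H := cfc (fun x : ℝ => max (-x) 0) A

/-- The trace of a trace-class operator `A`, computed from the decomposition of `A`
into the positive and negative parts of its real and imaginary parts. -/
def opTrace (A : H →L[ℂ] H) : ℂ :=
  (((posTrace (opPosPart (opRe A))).toReal - (posTrace (opNegPart (opRe A))).toReal : ℝ) : ℂ) +
    Complex.I * (((posTrace (opPosPart (opIm A))).toReal
      - (posTrace (opNegPart (opIm A))).toReal : ℝ) : ℂ)

/-- A map on `J_1` is trace preserving if `tr (φ A) = tr A` for all `A ∈ J_1`. -/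
def TracePreserving (φ : (H →L[ℂ] H) → (H →L[ℂ] H)) : Prop :=
  ∀ A, MemJp 1 A → opTrace (φ A) = opTrace A

/-- The Hilbert–Schmidt inner product `⟨A, B⟩₂ = tr (A⋆ B)`. -/
def hsInner (A B : H →L[ℂ] H) : ℂ := opTrace (adjoint A * B)

/-- `λ` belongs to the resolvent set of the map `φ` on `J_p`: `λ - φ` has a bounded
linear inverse on `J_p`. -/
def ResolventAt (p : ℝ≥0∞) (φ : (H →L[ℂ] H) → (H →L[ℂ] H)) (lam : ℂ) : Prop :=
  ∃ ψ : (H →L[ℂ] H) → (H →L[ℂ] H), IsLinJp p ψ ∧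
    (∃ C : ℝ≥0, ∀ A, MemJp p A → schattenNorm p (ψ A) ≤ C * schattenNorm p A) ∧
    (∀ A, MemJp p A → ψ (lam • A - φ A) = A) ∧
    (∀ A, MemJp p A → lam • ψ A - φ (ψ A) = A)

/-- `U` is the partial isometry in the polar decomposition `A = U |A|`:
it is isometric on the closure of the range of `|A|` and vanishes on `ker A`. -/
def IsPolarDecomp (A U : H →L[ℂ] H) : Prop :=
  A = U * opAbs A ∧ (∀ x ∈ closure (Set.range (opAbs A)), ‖U x‖ = ‖x‖) ∧
    ∀ x, A x = 0 → U x = 0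


section ErgodicHelpers

lemma IsPosSemidef.re_nonneg {A : H →L[ℂ] H} (hA : IsPosSemidef A) (x : H) :
    0 ≤ (⟪x, A x⟫).re := (Complex.nonneg_iff.mp (hA x)).1

lemma IsPosSemidef.inner_eq_re {A : H →L[ℂ] H} (hA : IsPosSemidef A) (x : H) :
    ⟪x, A x⟫ = ((⟪x, A x⟫).re : ℂ) :=
  Complex.ext rfl (by simpa using (Complex.nonneg_iff.mp (hA x)).2.symm)

lemma IsPosSemidef.isPositive {A : H →L[ℂ] H} (hA : IsPosSemidef A) : A.IsPositive := by
  rw [ContinuousLinearMap.isPositive_iff_complex]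
  intro x
  have h : ⟪A x, x⟫ = ((⟪x, A x⟫).re : ℂ) := by
    rw [← inner_conj_symm (A x) x, hA.inner_eq_re x, Complex.conj_ofReal, Complex.ofReal_re]
  exact ⟨by rw [h]; simp, by rw [h]; simpa using hA.re_nonneg x⟩

lemma IsPosSemidef.symm {A : H →L[ℂ] H} (hA : IsPosSemidef A) (x y : H) :
    ⟪A x, y⟫ = ⟪x, A y⟫ :=
  ContinuousLinearMap.isSelfAdjoint_iff_isSymmetric.mp hA.isPositive.isSelfAdjoint x y

lemma IsPosSemidef.apply_eq_zero {A : H →L[ℂ] H} (hA : IsPosSemidef A) {x : H}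
    (hx : (⟪x, A x⟫).re = 0) : A x = 0 := by
  by_contra hy
  set N : ℝ := ‖A x‖ ^ 2 with hN
  have hN0 : 0 < N := by have := norm_pos_iff.mpr hy; positivity
  set c : ℝ := (⟪A x, A (A x)⟫).re with hc
  have hc0 : 0 ≤ c := hA.re_nonneg (A x)
  have key : ∀ ε : ℝ, 0 ≤ -2 * ε * N + ε ^ 2 * c := by
    intro ε
    have h0 := hA.re_nonneg (x - (ε : ℂ) • A x)
    have hAx : ⟪x, A (A x)⟫ = (N : ℂ) := by
      rw [← hA.symm x (A x), inner_self_eq_norm_sq_to_K, hN]; norm_cast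
    have hAx2 : ⟪A x, A x⟫ = (N : ℂ) := by
      rw [inner_self_eq_norm_sq_to_K, hN]; norm_cast
    have hexp : ⟪x - (ε : ℂ) • A x, A (x - (ε : ℂ) • A x)⟫
        = ⟪x, A x⟫ - (ε : ℂ) * (N : ℂ) - (ε : ℂ) * (N : ℂ)
          + (ε : ℂ) * (ε : ℂ) * ⟪A x, A (A x)⟫ := by
      rw [map_sub, map_smul, inner_sub_left, inner_sub_right, inner_sub_right,
        inner_smul_left, inner_smul_right, inner_smul_left, inner_smul_right,
        Complex.conj_ofReal, hAx, hAx2]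
      ring
    have hre := congrArg Complex.re hexp
    simp only [Complex.sub_re, Complex.add_re, Complex.mul_re, Complex.ofReal_re,
      Complex.ofReal_im, hx, Complex.mul_im, zero_mul, mul_zero, sub_zero, zero_sub] at hre
    rw [hre] at h0
    nlinarith [h0]
  have hc1 : (0:ℝ) < c + 1 := by linarith
  set ε : ℝ := N / (c + 1) with hε'
  have hε : 0 < ε := div_pos hN0 hc1
  have hεc : ε * (c + 1) = N := div_mul_cancel₀ _ (ne_of_gt hc1)
  have h5 : ε * c = N - ε := by linear_combination hεc
  have h7 : ε ^ 2 * c = ε * N - ε ^ 2 := by linear_combination ε * h5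
  have h6 := key ε
  nlinarith [mul_pos hε hN0, sq_nonneg ε]

lemma isPosSemidef_smul_sub {C D : H →L[ℂ] H} (hC : IsPosSemidef C) (hD : IsPosSemidef D)
    {α : ℝ} (h : ∀ x, (⟪x, C x⟫).re ≤ α * (⟪x, D x⟫).re) :
    IsPosSemidef ((α : ℂ) • D - C) := by
  intro x
  have hx : ⟪x, ((α : ℂ) • D - C) x⟫
      = ((α * (⟪x, D x⟫).re - (⟪x, C x⟫).re : ℝ) : ℂ) := by
    rw [ContinuousLinearMap.sub_apply, ContinuousLinearMap.smul_apply, inner_sub_right,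
      inner_smul_right, hC.inner_eq_re, hD.inner_eq_re]
    push_cast; simp
  rw [hx]
  exact Complex.zero_le_real.mpr (by linarith [h x])

variable (φ : (H →L[ℂ] H) →ₗ[ℂ] (H →L[ℂ] H))

lemma iterate_one_add_apply (m : ℕ) (A : H →L[ℂ] H) :
    (fun X => X + φ X)^[m] A = ((1 + φ) ^ m) A := by
  have h : (fun X : H →L[ℂ] H => X + φ X) = ⇑(1 + φ) := by
    funext X; simp
  rw [h, ← Module.End.pow_apply]

lemma one_add_pow_eq (m : ℕ) :
    ((1 + φ) ^ m) = ∑ k ∈ Finset.range (m + 1), (m.choose k) • (φ ^ k) := by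
  rw [add_comm, (Commute.one_right φ).add_pow]
  refine Finset.sum_congr rfl fun k hk => ?_
  rw [one_pow, mul_one, (Nat.cast_commute (m.choose k) (φ ^ k)).eq.symm, ← nsmul_eq_mul]

lemma inner_iterate (m : ℕ) (A : H →L[ℂ] H) (x : H) :
    ⟪x, ((fun X => X + φ X)^[m] A) x⟫
      = ∑ k ∈ Finset.range (m + 1), ((m.choose k : ℂ)) * ⟪x, ((φ ^ k) A) x⟫ := by
  rw [iterate_one_add_apply, one_add_pow_eq]
  simp only [← Nat.cast_smul_eq_nsmul ℂ, LinearMap.sum_apply, LinearMap.smul_apply,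
    ContinuousLinearMap.coe_sum', Finset.sum_apply, ContinuousLinearMap.coe_smul',
    Pi.smul_apply, inner_sum, inner_smul_right, smul_eq_mul]

lemma inner_iterate_re (m : ℕ) (A : H →L[ℂ] H) (x : H) :
    (⟪x, ((fun X => X + φ X)^[m] A) x⟫).re
      = ∑ k ∈ Finset.range (m + 1), (m.choose k : ℝ) * (⟪x, ((φ ^ k) A) x⟫).re := by
  rw [inner_iterate, Complex.re_sum]
  refine Finset.sum_congr rfl fun k _ => ?_
  simp [Complex.mul_re, Complex.natCast_im, Complex.natCast_re]

lemma inner_iterate_im (m : ℕ) (A : H →L[ℂ] H) (x : H) :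
    (⟪x, ((fun X => X + φ X)^[m] A) x⟫).im
      = ∑ k ∈ Finset.range (m + 1), (m.choose k : ℝ) * (⟪x, ((φ ^ k) A) x⟫).im := by
  rw [inner_iterate, Complex.im_sum]
  refine Finset.sum_congr rfl fun k _ => ?_
  simp [Complex.mul_im, Complex.natCast_im, Complex.natCast_re]

lemma isPosSemidef_pow (hpos : ∀ A, IsPosSemidef A → IsPosSemidef (φ A)) {A : H →L[ℂ] H} (hA : IsPosSemidef A) (k : ℕ) :
    IsPosSemidef ((φ ^ k) A) := by
  induction k with
  | zero => simpa using hA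
  | succ k ih =>
    rw [pow_succ']
    exact hpos _ ih

lemma isPosSemidef_iterate (hpos : ∀ A, IsPosSemidef A → IsPosSemidef (φ A)) {A : H →L[ℂ] H} (hA : IsPosSemidef A) (m : ℕ) :
    IsPosSemidef ((fun X => X + φ X)^[m] A) := by
  intro x
  rw [Complex.nonneg_iff]
  constructor
  · rw [inner_iterate_re]
    exact Finset.sum_nonneg fun k _ => mul_nonneg (by positivity)
      ((isPosSemidef_pow φ hpos hA k).re_nonneg x)
  · rw [inner_iterate_im]
    exact (Finset.sum_eq_zero fun k _ => by
      rw [(Complex.ext_iff.mp ((isPosSemidef_pow φ hpos hA k).inner_eq_re x)).2,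
        Complex.ofReal_im, mul_zero]).symm

section FinDim
variable [FiniteDimensional ℂ H]

set_option maxHeartbeats 1000000 in
lemma summable_exp_series (t : ℝ) (A : H →L[ℂ] H) :
    Summable (fun k : ℕ => ((t ^ k / k.factorial : ℝ)) • (fun X => φ X)^[k] A) := by
  obtain ⟨C, hC0, hC⟩ : ∃ C : ℝ, 0 ≤ C ∧ ∀ X : H →L[ℂ] H, ‖φ X‖ ≤ C * ‖X‖ := by
    refine ⟨‖LinearMap.toContinuousLinearMap φ‖, norm_nonneg _, fun X => ?_⟩
    conv_lhs => rw [← LinearMap.coe_toContinuousLinearMap' φ]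
    exact (LinearMap.toContinuousLinearMap φ).le_opNorm X
  have hb : ∀ k, ‖(fun X => φ X)^[k] A‖ ≤ C ^ k * ‖A‖ := by
    intro k
    induction k with
    | zero => simp
    | succ k ih =>
      rw [Function.iterate_succ_apply']
      calc ‖φ ((fun X => φ X)^[k] A)‖
          ≤ C * ‖(fun X => φ X)^[k] A‖ := hC _
        _ ≤ C * (C ^ k * ‖A‖) := mul_le_mul_of_nonneg_left ih hC0
        _ = C ^ (k + 1) * ‖A‖ := by ring
  refine Summable.of_norm_bounded
    (((Real.summable_pow_div_factorial (|t| * C))).mul_left ‖A‖) fun k => ?_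
  rw [norm_smul, Real.norm_eq_abs, abs_div, abs_pow, Nat.abs_cast]
  calc |t| ^ k / (k.factorial : ℝ) * ‖(fun X => φ X)^[k] A‖
      ≤ |t| ^ k / (k.factorial : ℝ) * (C ^ k * ‖A‖) := by
        exact mul_le_mul_of_nonneg_left (hb k) (by positivity)
    _ = ‖A‖ * ((|t| * C) ^ k / k.factorial) := by rw [mul_pow]; ring

set_option maxHeartbeats 1000000 in
lemma exp_inner (t : ℝ) (A : H →L[ℂ] H) (x : H) :
    ⟪x, expApply (fun X => φ X) t A x⟫
        = ∑' k : ℕ, ((t ^ k / k.factorial : ℝ) : ℂ) * ⟪x, ((φ ^ k) A) x⟫ ∧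
      Summable (fun k : ℕ => ((t ^ k / k.factorial : ℝ) : ℂ) * ⟪x, ((φ ^ k) A) x⟫) := by
  set L : (H →L[ℂ] H) →L[ℂ] ℂ :=
    (innerSL ℂ x).comp ((ContinuousLinearMap.apply ℂ H) x) with hL
  have hLdef : ∀ T : H →L[ℂ] H, L T = ⟪x, T x⟫ := fun T => rfl
  have hsum := summable_exp_series φ t A
  have hterm : ∀ k : ℕ, L (((t ^ k / k.factorial : ℝ)) • (fun X => φ X)^[k] A)
      = ((t ^ k / k.factorial : ℝ) : ℂ) * ⟪x, ((φ ^ k) A) x⟫ := by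
    intro k
    rw [map_smul_of_tower, hLdef, Module.End.pow_apply]
    rw [Complex.real_smul]
  constructor
  · have h1 := L.map_tsum hsum
    rw [expApply, ← hLdef, h1]
    exact tsum_congr hterm
  · have h2 : Summable fun k => L (((t ^ k / k.factorial : ℝ)) • (fun X => φ X)^[k] A) :=
      hsum.map L L.continuous
    simpa only [hterm] using h2

set_option maxHeartbeats 1000000 in
lemma exp_inner_re (hpos : ∀ A, IsPosSemidef A → IsPosSemidef (φ A)) {A : H →L[ℂ] H} (hA : IsPosSemidef A) (t : ℝ) (x : H) :
    ⟪x, expApply (fun X => φ X) t A x⟫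
        = ((∑' k : ℕ, (t ^ k / k.factorial) * (⟪x, ((φ ^ k) A) x⟫).re : ℝ) : ℂ) ∧
      Summable (fun k : ℕ => (t ^ k / k.factorial) * (⟪x, ((φ ^ k) A) x⟫).re) := by
  obtain ⟨h1, h2⟩ := exp_inner φ t A x
  have hterm : ∀ k : ℕ, ((t ^ k / k.factorial : ℝ) : ℂ) * ⟪x, ((φ ^ k) A) x⟫
      = (((t ^ k / k.factorial) * (⟪x, ((φ ^ k) A) x⟫).re : ℝ) : ℂ) := by
    intro k
    rw [(isPosSemidef_pow φ hpos hA k).inner_eq_re x]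
    push_cast
    simp
  have hs : Summable (fun k : ℕ => (t ^ k / k.factorial) * (⟪x, ((φ ^ k) A) x⟫).re) := by
    have h4 := h2.map Complex.reCLM Complex.reCLM.continuous
    have heq : (⇑Complex.reCLM ∘ fun k : ℕ =>
        ((t ^ k / k.factorial : ℝ) : ℂ) * ⟪x, ((φ ^ k) A) x⟫)
        = fun k : ℕ => (t ^ k / k.factorial) * (⟪x, ((φ ^ k) A) x⟫).re := by
      funext k
      simp [Complex.mul_re, ← Complex.ofReal_pow]
    rwa [heq] at h4
  refine ⟨?_, hs⟩
  rw [h1, tsum_congr hterm]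
  have := Complex.ofRealCLM.map_tsum hs
  simpa using this.symm
end FinDim


section Comparison
variable [FiniteDimensional ℂ H]

lemma psd_comparison {C D : H →L[ℂ] H}
    (hC : IsPosSemidef C) (hD : IsPosSemidef D)
    (hker : ∀ x, D x = 0 → C x = 0) :
    ∃ α : ℝ, 0 ≤ α ∧ IsPosSemidef ((α : ℂ) • D - C) := by
  by_cases hbot : ((LinearMap.ker (D : H →ₗ[ℂ] H) : Submodule ℂ H))ᗮ = ⊥
  · refine ⟨0, le_refl 0, isPosSemidef_smul_sub hC hD fun x => ?_⟩
    have hKtop : (LinearMap.ker (D : H →ₗ[ℂ] H) : Submodule ℂ H) = ⊤ :=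
      Submodule.orthogonal_eq_bot_iff.mp hbot
    have hx : x ∈ LinearMap.ker (D : H →ₗ[ℂ] H) := by rw [hKtop]; trivial
    have hDx : D x = 0 := hx
    rw [hker x hDx, hDx]
    simp
  · set K : Submodule ℂ H := LinearMap.ker (D : H →ₗ[ℂ] H) with hK
    set S : Set H := Metric.sphere (0 : H) 1 ∩ (Kᗮ : Set H) with hS
    have hScpt : IsCompact S :=
      (isCompact_sphere (0 : H) 1).inter_right Kᗮ.closed_of_finiteDimensional
    have hSne : S.Nonempty := by
      obtain ⟨v, hv, hv0⟩ := (Submodule.ne_bot_iff _).mp hbot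
      refine ⟨(‖v‖⁻¹ : ℂ) • v, ?_, Kᗮ.smul_mem _ hv⟩
      rw [Metric.mem_sphere, dist_zero_right]
      exact norm_smul_inv_norm hv0
    have hg : Continuous fun y : H => (⟪y, D y⟫).re :=
      Complex.continuous_re.comp (continuous_id.inner D.continuous)
    obtain ⟨x₀, hx₀S, hmin⟩ := hScpt.exists_isMinOn hSne hg.continuousOn
    set δ : ℝ := (⟪x₀, D x₀⟫).re with hδ'
    have hx₀n : ‖x₀‖ = 1 := by
      have h := hx₀S.1
      rwa [Metric.mem_sphere, dist_zero_right] at h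
    have hδ : 0 < δ := by
      rcases lt_or_eq_of_le (hD.re_nonneg x₀) with h | h
      · exact h
      · exfalso
        have hDx₀ : D x₀ = 0 := hD.apply_eq_zero h.symm
        have hx₀K : x₀ ∈ K := hDx₀
        have h0 : (⟪x₀, x₀⟫ : ℂ) = 0 :=
          (Submodule.mem_orthogonal K x₀).mp hx₀S.2 x₀ hx₀K
        have h1 : x₀ = 0 := inner_self_eq_zero.mp h0
        rw [h1, norm_zero] at hx₀n
        norm_num at hx₀n
    refine ⟨‖C‖ / δ, by positivity, isPosSemidef_smul_sub hC hD fun x => ?_⟩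
    obtain ⟨u, hu, v, hv, rfl⟩ := K.exists_add_mem_mem_orthogonal x
    have hDu : D u = 0 := hu
    have hCu : C u = 0 := hker u hDu
    have hCform : ⟪u + v, C (u + v)⟫ = ⟪v, C v⟫ := by
      rw [map_add, hCu, zero_add, inner_add_left, ← hC.symm u v, hCu,
        inner_zero_left, zero_add]
    have hDform : ⟪u + v, D (u + v)⟫ = ⟪v, D v⟫ := by
      rw [map_add, hDu, zero_add, inner_add_left, ← hD.symm u v, hDu,
        inner_zero_left, zero_add]
    rw [hCform, hDform]
    rcases eq_or_ne v 0 with hv0 | hv0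
    · rw [hv0]; simp
    · set w : H := (‖v‖⁻¹ : ℂ) • v with hw
      have hwS : w ∈ S := by
        refine ⟨?_, Kᗮ.smul_mem _ hv⟩
        rw [Metric.mem_sphere, dist_zero_right]
        exact norm_smul_inv_norm hv0
      have hwn : ‖w‖ = 1 := norm_smul_inv_norm hv0
      have hδw : δ ≤ (⟪w, D w⟫).re := hmin hwS
      have hvw : ((‖v‖ : ℂ)) • w = v := by
        rw [hw, smul_smul, ← Complex.ofReal_inv, ← Complex.ofReal_mul,
          mul_inv_cancel₀ (norm_ne_zero_iff.mpr hv0), Complex.ofReal_one, one_smul]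
      have hre : ∀ T : H →L[ℂ] H, (⟪v, T v⟫).re = ‖v‖ ^ 2 * (⟪w, T w⟫).re := by
        intro T
        conv_lhs => rw [← hvw]
        rw [map_smul, inner_smul_left, inner_smul_right, Complex.conj_ofReal]
        simp [Complex.mul_re]
        ring
      have hCw : (⟪w, C w⟫).re ≤ ‖C‖ := by
        calc (⟪w, C w⟫).re ≤ ‖(⟪w, C w⟫ : ℂ)‖ := (le_abs_self _).trans (Complex.abs_re_le_norm _)
          _ ≤ ‖w‖ * ‖C w‖ := norm_inner_le_norm _ _
          _ ≤ ‖w‖ * (‖C‖ * ‖w‖) := by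
              exact mul_le_mul_of_nonneg_left (C.le_opNorm w) (norm_nonneg w)
          _ = ‖C‖ := by rw [hwn]; ring
      have hDw0 : 0 ≤ (⟪w, D w⟫).re := hD.re_nonneg w
      rw [hre C, hre D]
      have ha : (0:ℝ) ≤ ‖v‖ ^ 2 := by positivity
      have h1 : ‖v‖ ^ 2 * (⟪w, C w⟫).re ≤ ‖v‖ ^ 2 * ‖C‖ :=
        mul_le_mul_of_nonneg_left hCw ha
      have h2 : ‖C‖ / δ * (‖v‖ ^ 2 * δ) = ‖v‖ ^ 2 * ‖C‖ := by
        field_simp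
      have h3 : ‖C‖ / δ * (‖v‖ ^ 2 * δ) ≤ ‖C‖ / δ * (‖v‖ ^ 2 * (⟪w, D w⟫).re) := by
        refine mul_le_mul_of_nonneg_left ?_ (by positivity)
        exact mul_le_mul_of_nonneg_left hδw ha
      linarith
end Comparison

end ErgodicHelpers

set_option maxHeartbeats 1600000 in
/-- For `φ` a positive linear map on `B(H)` with `dim H = n < ∞`,
`φ` is ergodic iff `(1 + φ)^(n-1) (A)` is positive definite for every
positive semidefinite `A ≠ 0`. -/
theorem ergodic_iff_one_add_pow [FiniteDimensional ℂ H]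
    (φ : (H →L[ℂ] H) →ₗ[ℂ] (H →L[ℂ] H))
    (hpos : ∀ A, IsPosSemidef A → IsPosSemidef (φ A)) :
    (∀ A, IsPosSemidef A → A ≠ 0 →
        ∃ t : ℝ, 0 < t ∧ IsPosDef (expApply (fun X => φ X) t A)) ↔
      (∀ A, IsPosSemidef A → A ≠ 0 →
        IsPosDef ((fun X => X + φ X)^[Module.finrank ℂ H - 1] A)) := by
  constructor
  · intro herg A hA hA0
    set n := Module.finrank ℂ H with hn
    set T : ℕ → (H →L[ℂ] H) := fun m => (fun X => X + φ X)^[m] A with hT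
    have hBpsd : ∀ m, IsPosSemidef (T m) := fun m => isPosSemidef_iterate φ hpos hA m
    have hBsucc : ∀ m, T (m + 1) = T m + φ (T m) :=
      fun m => Function.iterate_succ_apply' _ m A
    set K : ℕ → Submodule ℂ H := fun m => LinearMap.ker (T m : H →ₗ[ℂ] H) with hKdef
    have hmemK : ∀ m x, x ∈ K m ↔ T m x = 0 := fun m x => LinearMap.mem_ker
    have hiter : ∀ m x, (⟪x, T m x⟫).re
        = ∑ k ∈ Finset.range (m + 1), (m.choose k : ℝ) * (⟪x, ((φ ^ k) A) x⟫).re :=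
      fun m x => inner_iterate_re φ m A x
    have hform0 : ∀ m x, x ∈ K m ↔ (⟪x, T m x⟫).re = 0 := by
      intro m x
      rw [hmemK]
      constructor
      · intro h; rw [h, inner_zero_right]; rfl
      · intro h; exact (hBpsd m).apply_eq_zero h
    have hstep : ∀ m x, x ∈ K (m + 1) ↔ x ∈ K m ∧ φ (T m) x = 0 := by
      intro m x
      have hsplit : (⟪x, T (m + 1) x⟫).re = (⟪x, T m x⟫).re + (⟪x, φ (T m) x⟫).re := by
        rw [hBsucc m, ContinuousLinearMap.add_apply, inner_add_right, Complex.add_re]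
      constructor
      · intro hx
        have h0 := (hform0 (m + 1) x).mp hx
        rw [hsplit] at h0
        have h1 := (hBpsd m).re_nonneg x
        have h2 := (hpos _ (hBpsd m)).re_nonneg x
        exact ⟨(hform0 m x).mpr (by linarith),
          (hpos _ (hBpsd m)).apply_eq_zero (by linarith)⟩
      · rintro ⟨hx1, hx2⟩
        refine (hform0 (m + 1) x).mpr ?_
        rw [hsplit, (hform0 m x).mp hx1, hx2, inner_zero_right]
        norm_num
    have hmono : ∀ m, K (m + 1) ≤ K m := fun m x hx => ((hstep m x).mp hx).1
    have hconst : ∀ m, K (m + 1) = K m → ∀ j, K (m + j) = K m := by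
      intro m hm j
      induction j with
      | zero => rfl
      | succ j ih =>
        apply le_antisymm
        · exact le_trans (hmono (m + j)) (le_of_eq ih)
        · intro x hx
          obtain ⟨α, hα0, hαpsd⟩ := psd_comparison (hBpsd (m + j)) (hBpsd m)
            (fun z hz => (hmemK (m + j) z).mp (ih ▸ (hmemK m z).mpr hz))
          have hxm1 : x ∈ K (m + 1) := hm.symm ▸ hx
          have hφx : φ (T m) x = 0 := ((hstep m x).mp hxm1).2
          have hψ := hpos _ hαpsd
          have hlin : φ ((α : ℂ) • T m - T (m + j))
              = (α : ℂ) • φ (T m) - φ (T (m + j)) := by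
            rw [map_sub, map_smul]
          have happ : ((α : ℂ) • φ (T m) - φ (T (m + j))) x = -(φ (T (m + j)) x) := by
            rw [ContinuousLinearMap.sub_apply, ContinuousLinearMap.smul_apply, hφx,
              smul_zero, zero_sub]
          have h2 := hψ x
          rw [hlin, happ, inner_neg_right] at h2
          have h3 := (hpos _ (hBpsd (m + j))) x
          have h4 : ⟪x, φ (T (m + j)) x⟫ = 0 := le_antisymm (neg_nonneg.mp h2) h3
          have hxj : x ∈ K (m + j) := ih.symm ▸ hx
          refine (hform0 (m + j + 1) x).mpr ?_
          rw [hBsucc (m + j), ContinuousLinearMap.add_apply, inner_add_right,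
            Complex.add_re, (hform0 (m + j) x).mp hxj, h4]
          norm_num
    have hstrict : ∀ m, K m ≠ ⊥ → K (m + 1) < K m := by
      intro m hbot
      rcases lt_or_eq_of_le (hmono m) with h | h
      · exact h
      exfalso
      obtain ⟨x, hxK, hx0⟩ := (Submodule.ne_bot_iff _).mp hbot
      have hall : ∀ k : ℕ, (⟪x, ((φ ^ k) A) x⟫).re = 0 := by
        intro k
        have hxk : x ∈ K (m + k) := (hconst m h k).symm ▸ hxK
        have hf := (hform0 (m + k) x).mp hxk
        have hsum0 : (∑ i ∈ Finset.range (m + k + 1),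
            ((m + k).choose i : ℝ) * (⟪x, ((φ ^ i) A) x⟫).re) = 0 := by
          rw [← hiter (m + k) x]; exact hf
        have hterm := (Finset.sum_eq_zero_iff_of_nonneg (fun i _ =>
          mul_nonneg (by positivity)
            ((isPosSemidef_pow φ hpos hA i).re_nonneg x))).mp hsum0 k
          (Finset.mem_range.mpr (by omega))
        have hchoose : (0:ℝ) < ((m + k).choose k : ℝ) := by
          exact_mod_cast Nat.choose_pos (Nat.le_add_left k m)
        rcases mul_eq_zero.mp hterm with h' | h'
        · exact absurd h' (ne_of_gt hchoose)
        · exact h'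
      obtain ⟨t, ht, hpd⟩ := herg A hA hA0
      obtain ⟨he, hsum⟩ := exp_inner_re φ hpos hA t x
      have hlt := hpd x hx0
      rw [he] at hlt
      have hz : (∑' k : ℕ, (t ^ k / k.factorial) * (⟪x, ((φ ^ k) A) x⟫).re) = 0 := by
        have hzz : ∀ k : ℕ, (t ^ k / (k.factorial : ℝ)) * (⟪x, ((φ ^ k) A) x⟫).re = 0 :=
          fun k => by rw [hall k, mul_zero]
        rw [tsum_congr hzz, tsum_zero]
      rw [hz] at hlt
      simp at hlt
    have hy : ∃ y, A y ≠ 0 := by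
      by_contra h
      push_neg at h
      exact hA0 (ContinuousLinearMap.ext fun y => by rw [h y]; rfl)
    obtain ⟨y₀, hy₀⟩ := hy
    have : Nontrivial H := ⟨⟨A y₀, 0, hy₀⟩⟩
    have hn1 : 0 < n := by rw [hn]; exact Module.finrank_pos
    have hK0 : K 0 ≠ ⊤ := by
      intro htop
      have hy0K : y₀ ∈ K 0 := htop ▸ Submodule.mem_top
      have h0 : T 0 y₀ = 0 := (hmemK 0 y₀).mp hy0K
      exact hy₀ h0
    have hrank : ∀ m, K m = ⊥ ∨ Module.finrank ℂ (K m) + m < n := by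
      intro m
      induction m with
      | zero =>
        right
        have h1 : K 0 < ⊤ := lt_top_iff_ne_top.mpr hK0
        have h2 := Submodule.finrank_lt_finrank_of_lt h1
        rw [finrank_top, ← hn] at h2
        omega
      | succ m ih =>
        by_cases hb : K (m + 1) = ⊥
        · exact Or.inl hb
        right
        have hmb : K m ≠ ⊥ := by
          intro h
          exact hb (le_bot_iff.mp (h ▸ hmono m))
        have h1 := Submodule.finrank_lt_finrank_of_lt (hstrict m hmb)
        rcases ih with h | h
        · exact absurd h hmb
        · omega
    have hKbot : K (n - 1) = ⊥ := by
      rcases hrank (n - 1) with h | h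
      · exact h
      · have h0 : Module.finrank ℂ (K (n - 1)) = 0 := by omega
        exact Submodule.finrank_eq_zero.mp h0
    intro x hx
    have hxK : x ∉ K (n - 1) := by
      rw [hKbot]
      simpa using hx
    have h0 := (hBpsd (n - 1)) x
    refine lt_of_le_of_ne h0 ?_
    intro heq
    apply hxK
    refine (hform0 (n - 1) x).mpr ?_
    rw [← heq]
    rfl
  · intro hpow A hA hA0
    refine ⟨1, one_pos, ?_⟩
    intro x hx
    have hpd := hpow A hA hA0 x hx
    set n := Module.finrank ℂ H with hn
    have hre0 : 0 < (⟪x, ((fun X => X + φ X)^[n - 1] A) x⟫).re := by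
      have h1 := (Complex.lt_def.mp hpd).1
      simpa using h1
    have hsum := inner_iterate_re φ (n - 1) A x
    have hk : ∃ k, k ∈ Finset.range (n - 1 + 1) ∧ 0 < (⟪x, ((φ ^ k) A) x⟫).re := by
      by_contra hcon
      push_neg at hcon
      have hzero : ∀ k ∈ Finset.range (n - 1 + 1),
          ((n - 1).choose k : ℝ) * (⟪x, ((φ ^ k) A) x⟫).re = 0 := by
        intro k hkm
        have h1 := (isPosSemidef_pow φ hpos hA k).re_nonneg x
        have h2 := hcon k hkm
        rw [le_antisymm h2 h1, mul_zero]
      rw [hsum, Finset.sum_eq_zero hzero] at hre0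
      exact lt_irrefl 0 hre0
    obtain ⟨k, hkmem, hkpos⟩ := hk
    obtain ⟨he, hs⟩ := exp_inner_re φ hpos hA 1 x
    rw [he]
    refine Complex.zero_lt_real.mpr ?_
    refine Summable.tsum_pos hs (fun i => mul_nonneg (by positivity)
      ((isPosSemidef_pow φ hpos hA i).re_nonneg x)) k ?_
    have hfac : (0:ℝ) < (1:ℝ) ^ k / k.factorial := by positivity
    exact mul_pos hfac hkpos

end
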